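/- The subspace U is invariant under each of the maps K, K⁻¹, A*_L, B*_L, A*_R, B*_R, A_ℓ, B_ℓ, A_r, B_r. Moreover, on U the q-Serre relations hold for the starred maps: (A*_L)³B*_L − [3]_q (A*_L)²B*_L A*_L + [3]_q A*_L B*_L (A*_L)² − B*_L (A*_L)³ = 0 on U, and likewise with the pair (A*_L, B*_L) replaced by (B*_L, A*_L), by (A*_R, B*_R), and by (B*_R, A*_R). -/

import Mathlib

noncomputable section
namespace SqPaper

/-- The two letters: `0 ↦ A`, `1 ↦ B`. -/
abbrev Ltr := Fin 2
def lA : Ltr := 0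
def lB : Ltr := 1

/-- The pairing `⟨ , ⟩` on letters: `⟨A,A⟩=⟨B,B⟩=2`, `⟨A,B⟩=⟨B,A⟩=-2`. -/
def brk (x y : Ltr) : ℤ := if x = y then 2 else -2

variable (F : Type*) [Field F]

/-- The free algebra `V` on the two generators, realized as the monoid algebra of the
free monoid on two letters; the words form the standard basis. -/
abbrev FA := MonoidAlgebra F (FreeMonoid Ltr)

/-- The standard basis vector attached to a word (list of letters). -/
def wd (l : List Ltr) : FA F := MonoidAlgebra.single (FreeMonoid.ofList l) 1

def Agen : FA F := wd F [lA]
def Bgen : FA F := wd F [lB]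

/-- View an element of `V` as a finitely supported function on words. -/
def fsp (v : FA F) : FreeMonoid Ltr →₀ F := v.coeff

/-- The symmetric bilinear form on `V` for which the standard basis of words is orthonormal. -/
def form (u v : FA F) : F := (fsp F u).sum fun w c => c * (fsp F v) w

/-- Extend a function on words to an `F`-linear map on `V`. -/
def mkMap {M : Type*} [AddCommMonoid M] [Module F M] (f : List Ltr → M) :
    FA F →ₗ[F] M :=
  (Finsupp.lsum F fun w => LinearMap.toSpanSingleton F M (f (FreeMonoid.toList w))) ∘ₗ
    (MonoidAlgebra.coeffLinearEquiv F).toLinearMap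

/-- `[3]_q = (q³ - q⁻³)/(q - q⁻¹)`. -/
def tri (q : F) : F := (q ^ 3 - q⁻¹ ^ 3) / (q - q⁻¹)

/-- The q-shuffle product on words. -/
def shufW (q : F) : List Ltr → List Ltr → FA F
  | [], v => wd F v
  | u, [] => wd F u
  | a :: u, b :: v =>
      wd F [a] * shufW q u (b :: v) +
        (q ^ (((a :: u).map (fun x => brk x b)).sum)) • (wd F [b] * shufW q (a :: u) v)
  termination_by u v => u.length + v.length

/-- The q-shuffle product `⋆` on `V`, as a bilinear map. -/
def qshuf (q : F) : FA F →ₗ[F] FA F →ₗ[F] FA F :=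
  mkMap F fun u => mkMap F fun v => shufW F q u v

/-- Iterated `⋆`-product of the letters of a word. -/
def thetaW (q : F) : List Ltr → FA F
  | [] => 1
  | a :: t => qshuf F q (wd F [a]) (thetaW q t)

/-- `θ : V → V`, the algebra homomorphism from the free algebra to the q-shuffle algebra
with `θ(A) = A`, `θ(B) = B`. -/
def theta (q : F) : FA F →ₗ[F] FA F := mkMap F fun l => thetaW F q l

/-- `A_L`, left multiplication by `A` in the free algebra. -/
def AL : FA F →ₗ[F] FA F := LinearMap.mulLeft F (Agen F)
def BL : FA F →ₗ[F] FA F := LinearMap.mulLeft F (Bgen F)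
def AR : FA F →ₗ[F] FA F := LinearMap.mulRight F (Agen F)
def BR : FA F →ₗ[F] FA F := LinearMap.mulRight F (Bgen F)

/-- `X*_L` (for the letter `x`): deletes the letter `x` from the front of a word. -/
def delL (x : Ltr) : FA F →ₗ[F] FA F :=
  mkMap F fun l => if l.head? = some x then wd F l.tail else 0

/-- `X*_R` (for the letter `x`): deletes the letter `x` from the end of a word. -/
def delR (x : Ltr) : FA F →ₗ[F] FA F :=
  mkMap F fun l => if l.getLast? = some x then wd F l.dropLast else 0

/-- `X_ℓ`: left q-shuffle multiplication by the letter `x`. -/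
def shL (q : F) (x : Ltr) : FA F →ₗ[F] FA F := qshuf F q (wd F [x])

/-- `X_r`: right q-shuffle multiplication by the letter `x`. -/
def shR (q : F) (x : Ltr) : FA F →ₗ[F] FA F := (qshuf F q).flip (wd F [x])

/-- `X*_ℓ`: the weighted deletion map, deleting an occurrence of the letter `x`
with weight `q^{⟨v₁,x⟩+⋯+⟨v_{i-1},x⟩}`. -/
def lowL (q : F) (x : Ltr) : FA F →ₗ[F] FA F :=
  mkMap F fun l =>
    ∑ i ∈ Finset.range l.length,
      if l[i]? = some x then
        (q ^ (((l.take i).map (fun y => brk y x)).sum)) • wd F (l.eraseIdx i)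
      else 0

/-- `X*_r`: the weighted deletion map, deleting an occurrence of the letter `x`
with weight `q^{⟨vₙ,x⟩+⋯+⟨v_{i+1},x⟩}`. -/
def lowR (q : F) (x : Ltr) : FA F →ₗ[F] FA F :=
  mkMap F fun l =>
    ∑ i ∈ Finset.range l.length,
      if l[i]? = some x then
        (q ^ (((l.drop (i + 1)).map (fun y => brk y x)).sum)) • wd F (l.eraseIdx i)
      else 0

/-- `K`, the algebra automorphism of the free algebra `V` with `K(A) = q²A`, `K(B) = q⁻²B`;
on a word `v = v₁⋯vₙ` it acts as `K(v) = v·q^{⟨v₁,A⟩+⋯+⟨vₙ,A⟩}`. -/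
def Kop (q : F) : FA F →ₗ[F] FA F :=
  mkMap F fun l => (q ^ ((l.map (fun y => brk y lA)).sum)) • wd F l

/-- `K⁻¹`; on a word `v = v₁⋯vₙ` it acts as `K⁻¹(v) = v·q^{⟨v₁,B⟩+⋯+⟨vₙ,B⟩}`. -/
def Kinv (q : F) : FA F →ₗ[F] FA F :=
  mkMap F fun l => (q ^ ((l.map (fun y => brk y lB)).sum)) • wd F l

/-- `T`, the automorphism of the free algebra swapping `A` and `B`. -/
def Top : FA F →ₗ[F] FA F :=
  mkMap F fun l => wd F (l.map (fun x => if x = lA then lB else lA))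

/-- `Â = Q(A_L − K B_R)` and `B̂ = Q(B_L − K⁻¹ A_R)` where `Q = 1 - q²`. -/
def hatOp (q : F) (a : Ltr) : FA F →ₗ[F] FA F :=
  if a = lA then (1 - q ^ 2) • (AL F - Kop F q ∘ₗ BR F)
  else (1 - q ^ 2) • (BL F - Kinv F q ∘ₗ AR F)

def phiW (q : F) : List Ltr → FA F
  | [] => 1
  | a :: t => hatOp F q a (phiW q t)

/-- The map `φ`: `φ(1) = 1` and `φ(v₁⋯vₙ) = v̂₁v̂₂⋯v̂ₙ(1)`. -/
def phi (q : F) : FA F →ₗ[F] FA F := mkMap F fun l => phiW F q l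

/-- `ψ = K B_R A*_L + K⁻¹ A_R B*_L`. -/
def psi (q : F) : FA F →ₗ[F] FA F :=
  Kop F q ∘ₗ BR F ∘ₗ delL F lA + Kinv F q ∘ₗ AR F ∘ₗ delL F lB

/-- `V_n`, the span of the words of length `n`. -/
def Vn (n : ℕ) : Submodule F (FA F) :=
  Submodule.span F { x | ∃ l : List Ltr, l.length = n ∧ x = wd F l }

/-- `J⁺ = A³B − [3]_q A²BA + [3]_q ABA² − BA³`. -/
def Jp (q : F) : FA F :=
  Agen F ^ 3 * Bgen F - tri F q • (Agen F ^ 2 * Bgen F * Agen F)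
    + tri F q • (Agen F * Bgen F * Agen F ^ 2) - Bgen F * Agen F ^ 3

/-- `J⁻ = B³A − [3]_q B²AB + [3]_q BAB² − AB³`. -/
def Jm (q : F) : FA F :=
  Bgen F ^ 3 * Agen F - tri F q • (Bgen F ^ 2 * Agen F * Bgen F)
    + tri F q • (Bgen F * Agen F * Bgen F ^ 2) - Agen F * Bgen F ^ 3

/-- `J`, the two-sided ideal of the free algebra generated by `J⁺` and `J⁻`
(realized as the `F`-span of the elements `a·J^±·b`). -/
def Jsub (q : F) : Submodule F (FA F) :=
  Submodule.span F { x | ∃ a b : FA F, x = a * Jp F q * b ∨ x = a * Jm F q * b }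

/-- `U`, the subalgebra of the q-shuffle algebra `(V,⋆)` generated by `A` and `B`,
realized as the span of all `⋆`-products of the letters. -/
def Usub (q : F) : Submodule F (FA F) :=
  Submodule.span F (Set.range fun l : List Ltr => thetaW F q l)

/-- A `□_q`-module structure on an `F`-vector space `M`: four operators
`x₀, x₁, x₂, x₃` (indices mod 4) satisfying the q-Weyl and q-Serre relations. -/
structure SqAct (q : F) (M : Type*) [AddCommGroup M] [Module F M] where
  x : ZMod 4 → Module.End F M
  weyl : ∀ i : ZMod 4,
    q • (x i * x (i + 1)) - q⁻¹ • (x (i + 1) * x i) = (q - q⁻¹) • (1 : Module.End F M)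
  serre : ∀ i : ZMod 4,
    x i ^ 3 * x (i + 2) - tri F q • (x i ^ 2 * x (i + 2) * x i)
      + tri F q • (x i * x (i + 2) * x i ^ 2) - x (i + 2) * x i ^ 3 = 0

variable {F} {q : F} {M : Type*} [AddCommGroup M] [Module F M]

/-- A `□_q`-module `M` is generated by `ξ` if no proper submodule
(subspace invariant under all the `xᵢ`) contains `ξ`. -/
def SqAct.Gen (S : SqAct F q M) (ξ : M) : Prop :=
  ∀ W : Submodule F M, (∀ i : ZMod 4, ∀ m ∈ W, S.x i m ∈ W) → ξ ∈ W → W = ⊤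

/-- `W_n`: the span of the vectors `u₁u₂⋯uₙ·ξ` with each `uᵢ ∈ {x₀, x₂}`. -/
def SqAct.Wn (S : SqAct F q M) (ξ : M) (n : ℕ) : Submodule F M :=
  Submodule.span F
    { m | ∃ l : List (ZMod 4), l.length = n ∧ (∀ i ∈ l, i = 0 ∨ i = 2) ∧
        m = l.foldr (fun i acc => S.x i acc) ξ }

end SqPaper

namespace SqPaper
variable {F : Type*} [Field F]

lemma mkMap_wd {M : Type*} [AddCommMonoid M] [Module F M] (f : List Ltr → M) (l : List Ltr) :
    mkMap F f (wd F l) = f l := by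
  rw [mkMap, LinearMap.comp_apply, LinearEquiv.coe_coe, MonoidAlgebra.coeffLinearEquiv_apply,
    wd, MonoidAlgebra.coeff_single]
  rw [Finsupp.lsum_single, LinearMap.toSpanSingleton_apply, one_smul, FreeMonoid.toList_ofList]

lemma wd_mul (l m : List Ltr) : wd F l * wd F m = wd F (l ++ m) := by
  simp [wd, MonoidAlgebra.single_mul_single, FreeMonoid.ofList_append]

lemma wd_nil : wd F [] = (1 : FA F) := rfl

/-- ext for linear maps out of FA via words -/
lemma fa_hom_ext {M : Type*} [AddCommMonoid M] [Module F M] {f g : FA F →ₗ[F] M}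
    (h : ∀ l : List Ltr, f (wd F l) = g (wd F l)) : f = g := by
  apply MonoidAlgebra.lhom_ext'
  intro a
  apply LinearMap.ext_ring
  have := h (FreeMonoid.toList a)
  simpa [wd] using this

end SqPaper
namespace SqPaper
variable {F : Type*} [Field F] {q : F}

lemma shufW_nil_left (v : List Ltr) : shufW F q [] v = wd F v := by
  cases v <;> simp [shufW]

lemma shufW_nil_right (u : List Ltr) : shufW F q u [] = wd F u := by
  cases u <;> simp [shufW]

lemma shufW_cons (a b : Ltr) (u v : List Ltr) :
    shufW F q (a :: u) (b :: v) =
      wd F [a] * shufW F q u (b :: v) +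
        (q ^ (((a :: u).map (fun x => brk x b)).sum)) • (wd F [b] * shufW F q (a :: u) v) := by
  rw [shufW]

lemma qshuf_wd (u v : List Ltr) : qshuf F q (wd F u) (wd F v) = shufW F q u v := by
  rw [qshuf, mkMap_wd, mkMap_wd]

lemma shL_wd (x : Ltr) (l : List Ltr) : shL F q x (wd F l) = shufW F q [x] l := by
  rw [shL, qshuf_wd]

lemma shR_wd (x : Ltr) (l : List Ltr) : shR F q x (wd F l) = shufW F q l [x] := by
  rw [shR, LinearMap.flip_apply, qshuf_wd]

lemma shL_one (x : Ltr) : shL F q x 1 = wd F [x] := by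
  rw [← wd_nil, shL_wd, shufW_nil_right]

lemma shR_one (x : Ltr) : shR F q x 1 = wd F [x] := by
  rw [← wd_nil, shR_wd, shufW_nil_left]

lemma brk_comm (x y : Ltr) : brk x y = brk y x := by
  unfold brk; by_cases h : x = y <;> simp [h, eq_comm]

/-- weight of a multiset of letters against a letter -/
def wt (m : Multiset Ltr) (y : Ltr) : ℤ := (m.map (fun z => brk z y)).sum

lemma wt_coe (l : List Ltr) (y : Ltr) : wt (↑l) y = (l.map (fun z => brk z y)).sum := by
  simp [wt]

lemma wt_cons (a : Ltr) (m : Multiset Ltr) (y : Ltr) : wt (a ::ₘ m) y = brk a y + wt m y := by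
  simp [wt]

/-- (E): left-shuffle by a letter, front recursion -/
lemma shL_cons (a b : Ltr) (m : List Ltr) :
    shL F q a (wd F (b :: m)) =
      wd F (a :: b :: m) + (q ^ (brk a b)) • (wd F [b] * shL F q a (wd F m)) := by
  rw [shL_wd, shufW_cons, shufW_nil_left, shL_wd]
  simp [wd_mul]

/-- (R-rec): right-shuffle by a letter, front recursion -/
lemma shR_cons (y b : Ltr) (t : List Ltr) :
    shR F q y (wd F (b :: t)) =
      wd F [b] * shR F q y (wd F t) + (q ^ (brk b y + wt (↑t) y)) • wd F (y :: b :: t) := by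
  rw [shR_wd, shufW_cons, shufW_nil_right, shR_wd, wt_coe]
  simp [wd_mul]

end SqPaper
namespace SqPaper
variable {F : Type*} [Field F] {q : F}

/-- span of words with letter multiset `m` -/
def Vc (m : Multiset Ltr) : Submodule F (FA F) :=
  Submodule.span F { x | ∃ l : List Ltr, (↑l : Multiset Ltr) = m ∧ x = wd F l }

lemma wd_mem_Vc (l : List Ltr) : wd F l ∈ (Vc (↑l) : Submodule F (FA F)) :=
  Submodule.subset_span ⟨l, rfl, rfl⟩

/-- two linear maps agreeing on words of multiset m agree on Vc m -/
lemma eqOn_Vc {m : Multiset Ltr} {M : Type*} [AddCommGroup M] [Module F M]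
    {f g : FA F →ₗ[F] M}
    (h : ∀ l : List Ltr, (↑l : Multiset Ltr) = m → f (wd F l) = g (wd F l))
    {X : FA F} (hX : X ∈ (Vc m : Submodule F (FA F))) : f X = g X := by
  have hle : (Vc m : Submodule F (FA F)) ≤ LinearMap.ker (f - g) := by
    rw [Vc, Submodule.span_le]
    rintro x ⟨l, hl, rfl⟩
    simp only [SetLike.mem_coe, LinearMap.mem_ker, LinearMap.sub_apply, h l hl, sub_self]
  have := hle hX
  rw [LinearMap.mem_ker, LinearMap.sub_apply, sub_eq_zero] at this
  exact this

lemma mulLeft_mem_Vc {m : Multiset Ltr} (b : Ltr) {X : FA F}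
    (hX : X ∈ (Vc m : Submodule F (FA F))) :
    wd F [b] * X ∈ (Vc (b ::ₘ m) : Submodule F (FA F)) := by
  have hle : (Vc m : Submodule F (FA F)) ≤
      Submodule.comap (LinearMap.mulLeft F (wd F [b])) (Vc (b ::ₘ m)) := by
    rw [Vc, Submodule.span_le]
    rintro x ⟨l, hl, rfl⟩
    simp only [SetLike.mem_coe, Submodule.mem_comap, LinearMap.mulLeft_apply]
    rw [wd_mul]
    have : ((↑(b :: l) : Multiset Ltr)) = b ::ₘ m := by rw [← hl]; rfl
    exact this ▸ wd_mem_Vc (b :: l)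
  exact hle hX

lemma shL_mem_Vc_wd (a : Ltr) (t : List Ltr) :
    shL F q a (wd F t) ∈ (Vc (a ::ₘ (↑t)) : Submodule F (FA F)) := by
  induction t with
  | nil => rw [wd_nil, shL_one]; exact wd_mem_Vc [a]
  | cons b s ih =>
      rw [shL_cons]
      refine Submodule.add_mem _ ?_ (Submodule.smul_mem _ _ ?_)
      · have : ((↑(a :: b :: s) : Multiset Ltr)) = a ::ₘ (↑(b :: s)) := by simp
        exact this ▸ wd_mem_Vc (a :: b :: s)
      · have h1 := mulLeft_mem_Vc (F := F) b ih
        have : (b ::ₘ a ::ₘ (↑s) : Multiset Ltr) = a ::ₘ (↑(b :: s)) := by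
          rw [Multiset.cons_swap]; simp
        exact this ▸ h1

lemma shL_mem_Vc {m : Multiset Ltr} (a : Ltr) {X : FA F}
    (hX : X ∈ (Vc m : Submodule F (FA F))) :
    shL F q a X ∈ (Vc (a ::ₘ m) : Submodule F (FA F)) := by
  have hle : (Vc m : Submodule F (FA F)) ≤
      Submodule.comap (shL F q a) (Vc (a ::ₘ m)) := by
    rw [Vc, Submodule.span_le]
    rintro x ⟨l, hl, rfl⟩
    simp only [SetLike.mem_coe, Submodule.mem_comap]
    simpa [hl] using shL_mem_Vc_wd (q := q) a l
  exact hle hX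

lemma shR_mem_Vc_wd (y : Ltr) (t : List Ltr) :
    shR F q y (wd F t) ∈ (Vc (y ::ₘ (↑t)) : Submodule F (FA F)) := by
  induction t with
  | nil => rw [wd_nil, shR_one]; exact wd_mem_Vc [y]
  | cons b s ih =>
      rw [shR_cons]
      refine Submodule.add_mem _ ?_ (Submodule.smul_mem _ _ ?_)
      · have h1 := mulLeft_mem_Vc (F := F) b ih
        have : (b ::ₘ y ::ₘ (↑s) : Multiset Ltr) = y ::ₘ (↑(b :: s)) := by
          rw [Multiset.cons_swap]; simp
        exact this ▸ h1
      · have : ((↑(y :: b :: s) : Multiset Ltr)) = y ::ₘ (↑(b :: s)) := by simp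
        exact this ▸ wd_mem_Vc (y :: b :: s)

end SqPaper
namespace SqPaper
variable {F : Type*} [Field F] {q : F}

/-- (El): linear version of shL_cons -/
lemma shL_mulLeft (a b : Ltr) (X : FA F) :
    shL F q a (wd F [b] * X) =
      wd F [a] * (wd F [b] * X) + (q ^ (brk a b)) • (wd F [b] * shL F q a X) := by
  have h : (shL F q a).comp (LinearMap.mulLeft F (wd F [b])) =
      (LinearMap.mulLeft F (wd F [a])).comp (LinearMap.mulLeft F (wd F [b])) +
        (q ^ (brk a b)) • ((LinearMap.mulLeft F (wd F [b])).comp (shL F q a)) := by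
    apply fa_hom_ext
    intro l
    simp only [LinearMap.comp_apply, LinearMap.add_apply, LinearMap.smul_apply,
      LinearMap.mulLeft_apply]
    rw [wd_mul]
    show shL F q a (wd F (b :: l)) = _
    rw [shL_cons]
    simp [wd_mul]
  have := congrArg (fun g => g X) h
  simpa using this

/-- (G2): right-shuffle through a left letter, on graded pieces -/
lemma shR_mulLeft_Vc {m : Multiset Ltr} (y b : Ltr) {X : FA F}
    (hX : X ∈ (Vc m : Submodule F (FA F))) :
    shR F q y (wd F [b] * X) =
      wd F [b] * shR F q y X +
        (q ^ (brk b y + wt m y)) • (wd F [y] * (wd F [b] * X)) := by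
  have h := eqOn_Vc (m := m)
    (f := (shR F q y).comp (LinearMap.mulLeft F (wd F [b])))
    (g := (LinearMap.mulLeft F (wd F [b])).comp (shR F q y) +
      (q ^ (brk b y + wt m y)) •
        ((LinearMap.mulLeft F (wd F [y])).comp (LinearMap.mulLeft F (wd F [b]))))
    (fun l hl => by
      simp only [LinearMap.comp_apply, LinearMap.add_apply, LinearMap.smul_apply,
        LinearMap.mulLeft_apply]
      rw [wd_mul]
      show shR F q y (wd F (b :: l)) = _
      rw [shR_cons, hl]
      simp [wd_mul]) hX
  simpa using h

end SqPaper
namespace SqPaper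
variable {F : Type*} [Field F] {q : F}

lemma wt_coe_cons (b : Ltr) (t : List Ltr) (y : Ltr) :
    wt (↑(b :: t)) y = brk b y + wt (↑t) y := by simp [wt]

lemma wt_nil (y : Ltr) : wt (↑([] : List Ltr)) y = 0 := by simp [wt]

lemma shR_shL_comm_wd (hq : q ≠ 0) (y a : Ltr) (l : List Ltr) :
    shR F q y (shL F q a (wd F l)) = shL F q a (shR F q y (wd F l)) := by
  induction l with
  | nil =>
      rw [wd_nil, shL_one, shR_one, shR_cons, shL_cons, wd_nil, shL_one, shR_one]
      simp [wd_mul, wt, brk_comm a y]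
  | cons b t ih =>
      rw [shL_cons, map_add, map_smul, shR_cons y a (b :: t),
        shR_mulLeft_Vc y b (shL_mem_Vc_wd a t), ih,
        shR_cons y b t, map_add, map_smul, shL_mulLeft a b, shL_cons a y (b :: t),
        shL_cons a b t]
      simp only [wd_mul, mul_add, mul_smul_comm, smul_add, smul_smul, wt_coe_cons, wt_cons,
        List.singleton_append, List.cons_append, List.nil_append]
      match_scalars <;>
      · simp only [zpow_add₀ hq]
        try ring
end SqPaper
namespace SqPaper
variable {F : Type*} [Field F] {q : F}

lemma shR_shL_comm (hq : q ≠ 0) (y a : Ltr) (v : FA F) :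
    shR F q y (shL F q a v) = shL F q a (shR F q y v) := by
  have h : (shR F q y).comp (shL F q a) = (shL F q a).comp (shR F q y) :=
    fa_hom_ext fun l => shR_shL_comm_wd hq y a l
  exact congrArg (fun g => g v) h

lemma thetaW_nil : thetaW F q [] = 1 := rfl

lemma thetaW_cons (a : Ltr) (t : List Ltr) :
    thetaW F q (a :: t) = shL F q a (thetaW F q t) := rfl

lemma thetaW_append (hq : q ≠ 0) (l : List Ltr) (y : Ltr) :
    thetaW F q (l ++ [y]) = shR F q y (thetaW F q l) := by
  induction l with
  | nil =>
      rw [List.nil_append, thetaW_cons, thetaW_nil, shR_one, shL_one]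
  | cons a t ih =>
      rw [List.cons_append, thetaW_cons, thetaW_cons, ih, shR_shL_comm hq]

lemma thetaW_mem_Usub (l : List Ltr) : thetaW F q l ∈ Usub F q :=
  Submodule.subset_span ⟨l, rfl⟩

lemma Usub_shL (x : Ltr) {v : FA F} (hv : v ∈ Usub F q) : shL F q x v ∈ Usub F q := by
  have hle : Usub F q ≤ Submodule.comap (shL F q x) (Usub F q) := by
    rw [Usub, Submodule.span_le]
    rintro _ ⟨l, rfl⟩
    simp only [SetLike.mem_coe, Submodule.mem_comap]
    rw [← thetaW_cons]
    exact thetaW_mem_Usub _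
  exact hle hv

lemma Usub_shR (hq : q ≠ 0) (x : Ltr) {v : FA F} (hv : v ∈ Usub F q) :
    shR F q x v ∈ Usub F q := by
  have hle : Usub F q ≤ Submodule.comap (shR F q x) (Usub F q) := by
    rw [Usub, Submodule.span_le]
    rintro _ ⟨l, rfl⟩
    simp only [SetLike.mem_coe, Submodule.mem_comap]
    rw [← thetaW_append hq]
    exact thetaW_mem_Usub _
  exact hle hv

lemma thetaW_mem_Vc (l : List Ltr) :
    thetaW F q l ∈ (Vc (↑l) : Submodule F (FA F)) := by
  induction l with
  | nil => exact Submodule.subset_span ⟨[], rfl, rfl⟩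
  | cons a t ih =>
      rw [thetaW_cons]
      have := shL_mem_Vc (q := q) a ih
      simpa using this

end SqPaper
namespace SqPaper
variable {F : Type*} [Field F] {q : F}

lemma delL_wd (x : Ltr) (l : List Ltr) :
    delL F x (wd F l) = if l.head? = some x then wd F l.tail else 0 := by
  rw [delL, mkMap_wd]

lemma delR_wd (x : Ltr) (l : List Ltr) :
    delR F x (wd F l) = if l.getLast? = some x then wd F l.dropLast else 0 := by
  rw [delR, mkMap_wd]

lemma delL_one (x : Ltr) : delL F x (1 : FA F) = 0 := by
  rw [← wd_nil, delL_wd]; simp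

lemma delR_one (x : Ltr) : delR F x (1 : FA F) = 0 := by
  rw [← wd_nil, delR_wd]; simp

lemma delL_mulLeft (x b : Ltr) (X : FA F) :
    delL F x (wd F [b] * X) = if b = x then X else 0 := by
  by_cases h : b = x
  · subst h
    have hmap : (delL F b).comp (LinearMap.mulLeft F (wd F [b])) = LinearMap.id := by
      apply fa_hom_ext
      intro l
      simp only [LinearMap.comp_apply, LinearMap.mulLeft_apply, LinearMap.id_apply]
      rw [wd_mul]
      show delL F b (wd F (b :: l)) = wd F l
      rw [delL_wd]; simp
    have := congrArg (fun g => g X) hmap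
    simpa using this
  · have hmap : (delL F x).comp (LinearMap.mulLeft F (wd F [b])) = 0 := by
      apply fa_hom_ext
      intro l
      simp only [LinearMap.comp_apply, LinearMap.mulLeft_apply, LinearMap.zero_apply]
      rw [wd_mul]
      show delL F x (wd F (b :: l)) = 0
      rw [delL_wd]; simp [h]
    have := congrArg (fun g => g X) hmap
    simpa [h] using this

/-- (I1): delL through shL -/
lemma delL_shL (x y : Ltr) (v : FA F) :
    delL F x (shL F q y v) =
      (if y = x then v else 0) + (q ^ (brk y x)) • shL F q y (delL F x v) := by
  have hmap : (delL F x).comp (shL F q y) =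
      (if y = x then (LinearMap.id : FA F →ₗ[F] FA F) else 0) +
        (q ^ (brk y x)) • ((shL F q y).comp (delL F x)) := by
    apply fa_hom_ext
    intro l
    simp only [LinearMap.comp_apply, LinearMap.add_apply, LinearMap.smul_apply]
    cases l with
    | nil =>
        rw [wd_nil, shL_one, delL_wd, delL_one]
        by_cases h : y = x <;> simp [h, wd_nil]
    | cons b t =>
        rw [shL_cons, map_add, map_smul, delL_wd (l := y :: b :: t), delL_mulLeft,
          delL_wd (l := b :: t)]
        by_cases hb : b = x <;> by_cases h : y = x <;>
          simp [hb, h]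
  have := congrArg (fun g => g v) hmap
  simp only [LinearMap.add_apply, LinearMap.smul_apply, LinearMap.comp_apply] at this
  by_cases h : y = x
  · simpa [h] using this
  · simpa [h] using this

end SqPaper
namespace SqPaper
variable {F : Type*} [Field F] {q : F}

lemma wt_coe_concat (t : List Ltr) (c y : Ltr) :
    wt (↑(t ++ [c])) y = wt (↑t) y + brk c y := by simp [wt]

lemma delR_mulLeft_Vc {m : Multiset Ltr} (hm : m ≠ 0) (x b : Ltr) {X : FA F}
    (hX : X ∈ (Vc m : Submodule F (FA F))) :
    delR F x (wd F [b] * X) = wd F [b] * delR F x X := by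
  have h := eqOn_Vc (m := m)
    (f := (delR F x).comp (LinearMap.mulLeft F (wd F [b])))
    (g := (LinearMap.mulLeft F (wd F [b])).comp (delR F x))
    (fun l hl => by
      cases l with
      | nil => exact ((hm (by simpa using hl.symm)).elim)
      | cons c t =>
          simp only [LinearMap.comp_apply, LinearMap.mulLeft_apply]
          rw [wd_mul]
          show delR F x (wd F (b :: c :: t)) = wd F [b] * delR F x (wd F (c :: t))
          rw [delR_wd, delR_wd, List.getLast?_cons_cons]
          by_cases hx : (c :: t).getLast? = some x
          · simp [hx, wd_mul, List.dropLast]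
          · simp [hx]) hX
  simpa using h

lemma delR_shR_wd (hq : q ≠ 0) (x y : Ltr) (l : List Ltr) :
    delR F x (shR F q y (wd F l)) =
      (if y = x then wd F l else 0) + (q ^ (brk y x)) • shR F q y (delR F x (wd F l)) := by
  induction l with
  | nil =>
      rw [wd_nil, shR_one, delR_wd, delR_one]
      by_cases h : y = x <;> simp [h, wd_nil]
  | cons b t ih =>
      rw [shR_cons y b t, map_add, map_smul,
        delR_mulLeft_Vc (Multiset.cons_ne_zero) x b (shR_mem_Vc_wd y t), ih,
        delR_wd x (b :: t)]
      rcases List.eq_nil_or_concat t with rfl | ⟨t₀, c, rfl⟩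
      · rw [delR_wd]
        by_cases hb : b = x <;> by_cases h : y = x <;>
          simp [hb, h, wd_mul, wt, shR_one, wd_nil, delR_one, delR_wd, List.dropLast, brk_comm,
            mul_add, mul_smul_comm]
      · simp only [List.concat_eq_append] at ih ⊢
        have h1 : delR F x (wd F (y :: b :: (t₀ ++ [c]))) =
            if c = x then wd F (y :: b :: t₀) else 0 := by
          rw [delR_wd]
          have : (y :: b :: (t₀ ++ [c])) = (y :: b :: t₀) ++ [c] := by simp
          rw [this, List.getLast?_concat, List.dropLast_concat]
          simp
        have h2 : delR F x (wd F (t₀ ++ [c])) = if c = x then wd F t₀ else 0 := by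
          rw [delR_wd, List.getLast?_concat, List.dropLast_concat]
          simp
        have h3 : (b :: (t₀ ++ [c])).getLast? = some c := by
          have : (b :: (t₀ ++ [c])) = (b :: t₀) ++ [c] := by simp
          rw [this, List.getLast?_concat]
        have h4 : (b :: (t₀ ++ [c])).dropLast = b :: t₀ := by
          have : (b :: (t₀ ++ [c])) = (b :: t₀) ++ [c] := by simp
          rw [this, List.dropLast_concat]
        by_cases hc : c = x
        · subst hc
          rw [if_pos rfl] at h1 h2
          rw [h1, h2, h3, h4, if_pos (rfl : some c = some c), shR_cons y b t₀, wt_coe_concat]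
          simp only [mul_add, mul_smul_comm, smul_add, smul_smul, mul_ite, mul_zero, wd_mul,
            List.singleton_append, List.cons_append, List.nil_append]
          match_scalars <;>
          · try simp only [zpow_add₀ hq, brk_comm c y]
            try ring
        · rw [if_neg hc] at h1 h2
          rw [h1, h2, h3, h4, if_neg (show ¬ some c = some x by simpa using hc)]
          simp [mul_add, mul_smul_comm, mul_ite, mul_zero, wd_mul]
  
lemma delR_shR (hq : q ≠ 0) (x y : Ltr) (v : FA F) :
    delR F x (shR F q y v) =
      (if y = x then v else 0) + (q ^ (brk y x)) • shR F q y (delR F x v) := by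
  have hmap : (delR F x).comp (shR F q y) =
      (if y = x then (LinearMap.id : FA F →ₗ[F] FA F) else 0) +
        (q ^ (brk y x)) • ((shR F q y).comp (delR F x)) := by
    apply fa_hom_ext
    intro l
    have := delR_shR_wd (q := q) hq x y l
    simp only [LinearMap.comp_apply, LinearMap.add_apply, LinearMap.smul_apply]
    by_cases h : y = x <;> simp [h] at this ⊢ <;> exact this
  have := congrArg (fun g => g v) hmap
  simp only [LinearMap.add_apply, LinearMap.smul_apply, LinearMap.comp_apply] at this
  by_cases h : y = x
  · simpa [h] using this
  · simpa [h] using this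

end SqPaper
namespace SqPaper
variable {F : Type*} [Field F] {q : F}

lemma Kop_wd (l : List Ltr) :
    Kop F q (wd F l) = (q ^ ((l.map (fun y => brk y lA)).sum)) • wd F l := by
  rw [Kop, mkMap_wd]

lemma Kinv_wd (l : List Ltr) :
    Kinv F q (wd F l) = (q ^ ((l.map (fun y => brk y lB)).sum)) • wd F l := by
  rw [Kinv, mkMap_wd]

lemma Kop_Vc {m : Multiset Ltr} {X : FA F} (hX : X ∈ (Vc m : Submodule F (FA F))) :
    Kop F q X = (q ^ (wt m lA)) • X := by
  have h := eqOn_Vc (m := m) (f := Kop F q)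
    (g := (q ^ (wt m lA)) • (LinearMap.id : FA F →ₗ[F] FA F))
    (fun l hl => by
      rw [Kop_wd]
      simp only [LinearMap.smul_apply, LinearMap.id_apply]
      rw [← hl, wt_coe]) hX
  simpa using h

lemma Kinv_Vc {m : Multiset Ltr} {X : FA F} (hX : X ∈ (Vc m : Submodule F (FA F))) :
    Kinv F q X = (q ^ (wt m lB)) • X := by
  have h := eqOn_Vc (m := m) (f := Kinv F q)
    (g := (q ^ (wt m lB)) • (LinearMap.id : FA F →ₗ[F] FA F))
    (fun l hl => by
      rw [Kinv_wd]
      simp only [LinearMap.smul_apply, LinearMap.id_apply]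
      rw [← hl, wt_coe]) hX
  simpa using h

lemma brk_AA : brk lA lA = 2 := by decide
lemma brk_BB : brk lB lB = 2 := by decide
lemma brk_AB : brk lA lB = -2 := by decide
lemma brk_BA : brk lB lA = -2 := by decide

lemma zpow_two_eq (q : F) : q ^ ((2:ℤ)) = q ^ 2 := by
  rw [show ((2:ℤ)) = ((2:ℕ):ℤ) by norm_num, zpow_natCast]

lemma zpow_neg_two_eq (q : F) : q ^ ((-2:ℤ)) = (q ^ 2)⁻¹ := by
  rw [show ((-2:ℤ)) = -((2:ℕ):ℤ) by norm_num, zpow_neg, zpow_natCast]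

lemma tri_eq (hq : q ≠ 0) (hq1 : ∀ k : ℕ, 0 < k → q ^ k ≠ 1) :
    tri F q = q ^ 2 + 1 + (q ^ 2)⁻¹ := by
  have h2 : q ^ 2 ≠ 1 := hq1 2 (by norm_num)
  have hsub : q - q⁻¹ ≠ 0 := by
    intro h
    apply h2
    have : q = q⁻¹ := sub_eq_zero.mp h
    calc q ^ 2 = q * q := sq q
    _ = q * q⁻¹ := by rw [← this]
    _ = 1 := mul_inv_cancel₀ hq
  rw [tri, div_eq_iff hsub]
  field_simp
  ring

end SqPaper
namespace SqPaper
variable {F : Type*} [Field F] {q : F}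

/-- pushing the Serre operator through a `p` with `dp = 1 + c pd`, `ep = c⁻¹ pe` -/
lemma serre_push1 (c t : F) (hc : c ≠ 0) (ht : t = c + 1 + c⁻¹)
    (d e p : FA F →ₗ[F] FA F)
    (hdp : ∀ v, d (p v) = v + c • p (d v))
    (hep : ∀ v, e (p v) = c⁻¹ • p (e v)) (v : FA F) :
    d (d (d (e (p v)))) - t • d (d (e (d (p v)))) + t • d (e (d (d (p v)))) -
        e (d (d (d (p v)))) =
      (c * c) • p (d (d (d (e v))) - t • d (d (e (d v))) + t • d (e (d (d v))) -
        e (d (d (d v)))) := by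
  subst ht
  simp only [hdp, hep, map_add, map_smul, map_sub, smul_add, smul_sub, smul_smul]
  match_scalars <;>
  · field_simp
    try ring
    try exact Or.inl trivial

/-- pushing the Serre operator through an `r` with `dr = c⁻¹ rd`, `er = 1 + c re` -/
lemma serre_push2 (c t : F) (hc : c ≠ 0) (ht : t = c + 1 + c⁻¹)
    (d e r : FA F →ₗ[F] FA F)
    (hdr : ∀ v, d (r v) = c⁻¹ • r (d v))
    (her : ∀ v, e (r v) = v + c • r (e v)) (v : FA F) :
    d (d (d (e (r v)))) - t • d (d (e (d (r v)))) + t • d (e (d (d (r v)))) -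
        e (d (d (d (r v)))) =
      ((c * c)⁻¹) • r (d (d (d (e v))) - t • d (d (e (d v))) + t • d (e (d (d v))) -
        e (d (d (d v)))) := by
  subst ht
  simp only [hdr, her, map_add, map_smul, map_sub, smul_add, smul_sub, smul_smul]
  match_scalars <;>
  · field_simp
    try ring
    try exact Or.inl trivial

end SqPaper
namespace SqPaper
variable {F : Type*} [Field F] {q : F}

lemma serre_theta_vanish_L (c t : F) (hc : c ≠ 0) (ht : t = c + 1 + c⁻¹)
    (d e : FA F →ₗ[F] FA F) (hd1 : d 1 = 0) (he1 : e 1 = 0)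
    (p r : FA F →ₗ[F] FA F)
    (hpr : ∀ y : Ltr, shL F q y = p ∨ shL F q y = r)
    (hdp : ∀ v, d (p v) = v + c • p (d v)) (hep : ∀ v, e (p v) = c⁻¹ • p (e v))
    (hdr : ∀ v, d (r v) = c⁻¹ • r (d v)) (her : ∀ v, e (r v) = v + c • r (e v)) :
    ∀ l, d (d (d (e (thetaW F q l)))) - t • d (d (e (d (thetaW F q l)))) +
      t • d (e (d (d (thetaW F q l)))) - e (d (d (d (thetaW F q l)))) = 0 := by
  intro l
  induction l with
  | nil => simp [thetaW_nil, hd1, he1]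
  | cons y s ih =>
      rw [thetaW_cons]
      rcases hpr y with h | h <;> rw [h]
      · rw [serre_push1 c t hc ht d e p hdp hep, ih, map_zero, smul_zero]
      · rw [serre_push2 c t hc ht d e r hdr her, ih, map_zero, smul_zero]

lemma serre_theta_vanish_R (hq : q ≠ 0) (c t : F) (hc : c ≠ 0) (ht : t = c + 1 + c⁻¹)
    (d e : FA F →ₗ[F] FA F) (hd1 : d 1 = 0) (he1 : e 1 = 0)
    (p r : FA F →ₗ[F] FA F)
    (hpr : ∀ y : Ltr, shR F q y = p ∨ shR F q y = r)
    (hdp : ∀ v, d (p v) = v + c • p (d v)) (hep : ∀ v, e (p v) = c⁻¹ • p (e v))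
    (hdr : ∀ v, d (r v) = c⁻¹ • r (d v)) (her : ∀ v, e (r v) = v + c • r (e v)) :
    ∀ l, d (d (d (e (thetaW F q l)))) - t • d (d (e (d (thetaW F q l)))) +
      t • d (e (d (d (thetaW F q l)))) - e (d (d (d (thetaW F q l)))) = 0 := by
  intro l
  induction l using List.reverseRecOn with
  | nil => simp [thetaW_nil, hd1, he1]
  | append_singleton s y ih =>
      rw [thetaW_append hq]
      rcases hpr y with h | h <;> rw [h]
      · rw [serre_push1 c t hc ht d e p hdp hep, ih, map_zero, smul_zero]
      · rw [serre_push2 c t hc ht d e r hdr her, ih, map_zero, smul_zero]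

end SqPaper

open SqPaper in
/-- `U` is invariant under `K, K⁻¹, A*_L, B*_L, A*_R, B*_R, A_ℓ, B_ℓ, A_r, B_r`,
and the q-Serre relations for the starred maps hold on `U`. -/
theorem U_invariant_and_qSerre (F : Type*) [Field F] (q : F) (hq : q ≠ 0)
    (hq1 : ∀ k : ℕ, 0 < k → q ^ k ≠ 1) :
    (∀ v ∈ Usub F q, Kop F q v ∈ Usub F q) ∧
    (∀ v ∈ Usub F q, Kinv F q v ∈ Usub F q) ∧
    (∀ v ∈ Usub F q, delL F lA v ∈ Usub F q) ∧
    (∀ v ∈ Usub F q, delL F lB v ∈ Usub F q) ∧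
    (∀ v ∈ Usub F q, delR F lA v ∈ Usub F q) ∧
    (∀ v ∈ Usub F q, delR F lB v ∈ Usub F q) ∧
    (∀ v ∈ Usub F q, shL F q lA v ∈ Usub F q) ∧
    (∀ v ∈ Usub F q, shL F q lB v ∈ Usub F q) ∧
    (∀ v ∈ Usub F q, shR F q lA v ∈ Usub F q) ∧
    (∀ v ∈ Usub F q, shR F q lB v ∈ Usub F q) ∧
    (∀ v ∈ Usub F q,
      (delL F lA ∘ₗ delL F lA ∘ₗ delL F lA ∘ₗ delL F lB
        - tri F q • (delL F lA ∘ₗ delL F lA ∘ₗ delL F lB ∘ₗ delL F lA)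
        + tri F q • (delL F lA ∘ₗ delL F lB ∘ₗ delL F lA ∘ₗ delL F lA)
        - delL F lB ∘ₗ delL F lA ∘ₗ delL F lA ∘ₗ delL F lA) v = 0) ∧
    (∀ v ∈ Usub F q,
      (delL F lB ∘ₗ delL F lB ∘ₗ delL F lB ∘ₗ delL F lA
        - tri F q • (delL F lB ∘ₗ delL F lB ∘ₗ delL F lA ∘ₗ delL F lB)
        + tri F q • (delL F lB ∘ₗ delL F lA ∘ₗ delL F lB ∘ₗ delL F lB)
        - delL F lA ∘ₗ delL F lB ∘ₗ delL F lB ∘ₗ delL F lB) v = 0) ∧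
    (∀ v ∈ Usub F q,
      (delR F lA ∘ₗ delR F lA ∘ₗ delR F lA ∘ₗ delR F lB
        - tri F q • (delR F lA ∘ₗ delR F lA ∘ₗ delR F lB ∘ₗ delR F lA)
        + tri F q • (delR F lA ∘ₗ delR F lB ∘ₗ delR F lA ∘ₗ delR F lA)
        - delR F lB ∘ₗ delR F lA ∘ₗ delR F lA ∘ₗ delR F lA) v = 0) ∧
    (∀ v ∈ Usub F q,
      (delR F lB ∘ₗ delR F lB ∘ₗ delR F lB ∘ₗ delR F lA
        - tri F q • (delR F lB ∘ₗ delR F lB ∘ₗ delR F lA ∘ₗ delR F lB)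
        + tri F q • (delR F lB ∘ₗ delR F lA ∘ₗ delR F lB ∘ₗ delR F lB)
        - delR F lA ∘ₗ delR F lB ∘ₗ delR F lB ∘ₗ delR F lB) v = 0) := by

  have hc : (q ^ 2 : F) ≠ 0 := pow_ne_zero 2 hq
  have ht : tri F q = q ^ 2 + 1 + (q ^ 2)⁻¹ := tri_eq hq hq1
  have hne : (lA : Ltr) ≠ lB := by decide
  have hne' : (lB : Ltr) ≠ lA := by decide
  -- delL / shL relations
  have hLAA : ∀ v : FA F, delL F lA (shL F q lA v) = v + (q ^ 2) • shL F q lA (delL F lA v) := by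
    intro v; rw [delL_shL]; simp [brk_AA, zpow_two_eq]
  have hLBA : ∀ v : FA F, delL F lB (shL F q lA v) = (q ^ 2)⁻¹ • shL F q lA (delL F lB v) := by
    intro v; rw [delL_shL, if_neg hne, brk_AB, zpow_neg_two_eq, zero_add]
  have hLAB : ∀ v : FA F, delL F lA (shL F q lB v) = (q ^ 2)⁻¹ • shL F q lB (delL F lA v) := by
    intro v; rw [delL_shL, if_neg hne', brk_BA, zpow_neg_two_eq, zero_add]
  have hLBB : ∀ v : FA F, delL F lB (shL F q lB v) = v + (q ^ 2) • shL F q lB (delL F lB v) := by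
    intro v; rw [delL_shL]; simp [brk_BB, zpow_two_eq]
  -- delR / shR relations
  have hRAA : ∀ v : FA F, delR F lA (shR F q lA v) = v + (q ^ 2) • shR F q lA (delR F lA v) := by
    intro v; rw [delR_shR hq]; simp [brk_AA, zpow_two_eq]
  have hRBA : ∀ v : FA F, delR F lB (shR F q lA v) = (q ^ 2)⁻¹ • shR F q lA (delR F lB v) := by
    intro v; rw [delR_shR hq, if_neg hne, brk_AB, zpow_neg_two_eq, zero_add]
  have hRAB : ∀ v : FA F, delR F lA (shR F q lB v) = (q ^ 2)⁻¹ • shR F q lB (delR F lA v) := by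
    intro v; rw [delR_shR hq, if_neg hne', brk_BA, zpow_neg_two_eq, zero_add]
  have hRBB : ∀ v : FA F, delR F lB (shR F q lB v) = v + (q ^ 2) • shR F q lB (delR F lB v) := by
    intro v; rw [delR_shR hq]; simp [brk_BB, zpow_two_eq]
  -- vanish lemmas
  have van1 := serre_theta_vanish_L (q := q) (q ^ 2) (tri F q) hc ht
    (delL F lA) (delL F lB) (delL_one lA) (delL_one lB) (shL F q lA) (shL F q lB)
    (fun y => by
      fin_cases y
      · exact Or.inl rfl
      · exact Or.inr rfl) hLAA hLBA hLAB hLBB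
  have van2 := serre_theta_vanish_L (q := q) (q ^ 2) (tri F q) hc ht
    (delL F lB) (delL F lA) (delL_one lB) (delL_one lA) (shL F q lB) (shL F q lA)
    (fun y => by
      fin_cases y
      · exact Or.inr rfl
      · exact Or.inl rfl) hLBB hLAB hLBA hLAA
  have van3 := serre_theta_vanish_R hq (q ^ 2) (tri F q) hc ht
    (delR F lA) (delR F lB) (delR_one lA) (delR_one lB) (shR F q lA) (shR F q lB)
    (fun y => by
      fin_cases y
      · exact Or.inl rfl
      · exact Or.inr rfl) hRAA hRBA hRAB hRBB
  have van4 := serre_theta_vanish_R hq (q ^ 2) (tri F q) hc ht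
    (delR F lB) (delR F lA) (delR_one lB) (delR_one lA) (shR F q lB) (shR F q lA)
    (fun y => by
      fin_cases y
      · exact Or.inr rfl
      · exact Or.inl rfl) hRBB hRAB hRBA hRAA
  -- invariance helpers
  have hinv : ∀ f : FA F →ₗ[F] FA F, (∀ l : List Ltr, f (thetaW F q l) ∈ Usub F q) →
      ∀ v ∈ Usub F q, f v ∈ Usub F q := by
    intro f hf v hv
    have hle : Usub F q ≤ Submodule.comap f (Usub F q) := by
      rw [Usub, Submodule.span_le]
      rintro _ ⟨l, rfl⟩
      simp only [SetLike.mem_coe, Submodule.mem_comap]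
      exact hf l
    exact hle hv
  have hker : ∀ f : FA F →ₗ[F] FA F, (∀ l : List Ltr, f (thetaW F q l) = 0) →
      ∀ v ∈ Usub F q, f v = 0 := by
    intro f hf v hv
    have hle : Usub F q ≤ LinearMap.ker f := by
      rw [Usub, Submodule.span_le]
      rintro _ ⟨l, rfl⟩
      simp only [SetLike.mem_coe, LinearMap.mem_ker]
      exact hf l
    exact hle hv
  have hdelL : ∀ x : Ltr, ∀ l : List Ltr, delL F x (thetaW F q l) ∈ Usub F q := by
    intro x l
    induction l with
    | nil => rw [thetaW_nil, delL_one]; exact Submodule.zero_mem _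
    | cons y s ih =>
        rw [thetaW_cons, delL_shL]
        refine Submodule.add_mem _ ?_ (Submodule.smul_mem _ _ (Usub_shL y ih))
        split
        · exact thetaW_mem_Usub s
        · exact Submodule.zero_mem _
  have hdelR : ∀ x : Ltr, ∀ l : List Ltr, delR F x (thetaW F q l) ∈ Usub F q := by
    intro x l
    induction l using List.reverseRecOn with
    | nil => rw [thetaW_nil, delR_one]; exact Submodule.zero_mem _
    | append_singleton s y ih =>
        rw [thetaW_append hq, delR_shR hq]
        refine Submodule.add_mem _ ?_ (Submodule.smul_mem _ _ (Usub_shR hq y ih))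
        split
        · exact thetaW_mem_Usub s
        · exact Submodule.zero_mem _
  refine ⟨?_, ?_, ?_, ?_, ?_, ?_, ?_, ?_, ?_, ?_, ?_, ?_, ?_, ?_⟩
  · exact hinv _ (fun l => by
      rw [Kop_Vc (thetaW_mem_Vc l)]
      exact Submodule.smul_mem _ _ (thetaW_mem_Usub l))
  · exact hinv _ (fun l => by
      rw [Kinv_Vc (thetaW_mem_Vc l)]
      exact Submodule.smul_mem _ _ (thetaW_mem_Usub l))
  · exact hinv _ (hdelL lA)
  · exact hinv _ (hdelL lB)
  · exact hinv _ (hdelR lA)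
  · exact hinv _ (hdelR lB)
  · exact hinv _ (fun l => by rw [← thetaW_cons]; exact thetaW_mem_Usub _)
  · exact hinv _ (fun l => by rw [← thetaW_cons]; exact thetaW_mem_Usub _)
  · exact hinv _ (fun l => by rw [← thetaW_append hq]; exact thetaW_mem_Usub _)
  · exact hinv _ (fun l => by rw [← thetaW_append hq]; exact thetaW_mem_Usub _)
  · exact hker _ (fun l => by
      simp only [LinearMap.sub_apply, LinearMap.add_apply, LinearMap.smul_apply,
        LinearMap.comp_apply]
      exact van1 l)
  · exact hker _ (fun l => by
      simp only [LinearMap.sub_apply, LinearMap.add_apply, LinearMap.smul_apply,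
        LinearMap.comp_apply]
      exact van2 l)
  · exact hker _ (fun l => by
      simp only [LinearMap.sub_apply, LinearMap.add_apply, LinearMap.smul_apply,
        LinearMap.comp_apply]
      exact van3 l)
  · exact hker _ (fun l => by
      simp only [LinearMap.sub_apply, LinearMap.add_apply, LinearMap.smul_apply,
        LinearMap.comp_apply]
      exact van4 l)
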